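/- Let an unambiguous complete product basis be given. Then there exists a unique function w : ∏_k A_k → ∏_k X_k such that the set of events of the basis is exactly {(a, w(a)) : a ∈ ∏_k A_k}; in particular, every outcome string a ∈ ∏_k A_k is the outcome string a^j of exactly one event j, and w(a^j) = x^j for every j. -/

import Mathlib

noncomputable section
open scoped BigOperators

/-- **The unique induced function of an unambiguous complete product basis**
(Lemma B.3): every outcome string is the outcome string of exactly one event,
and there is a unique function `w : ∏_k A_k → ∏_k X_k` whose graph
`{(a, w(a))}` is exactly the set of events; in particular `w(aʲ) = xʲ` for
every event `j`. -/
theorem unambiguous_basis_induced_function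
    -- `n` parties with local dimensions `d k`
    {n : ℕ} (hn : 1 ≤ n) (d : Fin n → ℕ) (hd : ∀ k, 1 ≤ d k)
    -- outcome sets `A k` with `|A k| = d k`, finite nonempty setting sets `X k`
    (A : Fin n → Type) [∀ k, Fintype (A k)] [∀ k, DecidableEq (A k)]
    (hA : ∀ k, Fintype.card (A k) = d k)
    (X : Fin n → Type) [∀ k, Fintype (X k)] [∀ k, Nonempty (X k)]
    [∀ k, DecidableEq (X k)]
    -- local vectors `|(a_k|x_k)⟩`, an orthonormal basis for each setting
    (v : ∀ k : Fin n, X k → A k → EuclideanSpace ℂ (Fin (d k)))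
    (hv : ∀ (k : Fin n) (x : X k), Orthonormal ℂ (v k x))
    -- `N = ∏_k d_k` pairwise distinct events with pairwise orthogonal
    -- product vectors (a complete product basis)
    {N : ℕ} (hN : N = ∏ k, d k)
    (e : Fin N → (∀ k, A k) × (∀ k, X k))
    (he : Function.Injective e)
    (horth : ∀ j j' : Fin N, j ≠ j' →
      (∏ k : Fin n,
        (inner ℂ (v k ((e j).2 k) ((e j).1 k))
          (v k ((e j').2 k) ((e j').1 k)) : ℂ)) = 0)
    -- unambiguity: for labels occurring among the events, two distinct local
    -- vectors are orthogonal iff they belong to the same setting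
    (hunamb : ∀ (k : Fin n) (a a' : A k) (x x' : X k),
      (∃ j, (e j).1 k = a ∧ (e j).2 k = x) →
      (∃ j, (e j).1 k = a' ∧ (e j).2 k = x') →
      v k x a ≠ v k x' a' →
      ((inner ℂ (v k x a) (v k x' a') : ℂ) = 0 ↔ x = x'))
    :
    (∀ a : ∀ k, A k, ∃! j : Fin N, (e j).1 = a) ∧
    (∃! w : (∀ k, A k) → ∀ k, X k,
      Set.range e = Set.range (fun a : ∀ k, A k => (a, w a)) ∧
        ∀ j : Fin N, w ((e j).1) = (e j).2) := by
  classical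
  have hone : ∀ (k : Fin n) (x : X k) (a : A k),
      (inner ℂ (v k x a) (v k x a) : ℂ) = 1 := by
    intro k x a
    have := (orthonormal_iff_ite.mp (hv k x)) a a
    simpa using this
  have hfinj : Function.Injective (fun j : Fin N => (e j).1) := by
    intro j j' h
    by_contra hne
    have h0 := horth j j' hne
    obtain ⟨k, -, hk⟩ := Finset.prod_eq_zero_iff.mp h0
    simp only at h
    have ha : (e j).1 k = (e j').1 k := by rw [h]
    rw [← ha] at hk
    have hvne : v k ((e j).2 k) ((e j).1 k) ≠ v k ((e j').2 k) ((e j).1 k) := by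
      intro heq
      rw [heq, hone] at hk
      exact one_ne_zero hk
    have hx := (hunamb k ((e j).1 k) ((e j).1 k) ((e j).2 k) ((e j').2 k)
      ⟨j, rfl, rfl⟩ ⟨j', ha.symm, rfl⟩ hvne).mp hk
    exact hvne (by rw [hx])
  have hcard : Fintype.card (∀ k, A k) = N := by
    rw [Fintype.card_pi, hN]
    exact Finset.prod_congr rfl (fun k _ => hA k)
  have hbij : Function.Bijective (fun j : Fin N => (e j).1) := by
    rw [Fintype.bijective_iff_injective_and_card]
    exact ⟨hfinj, by simp [hcard]⟩
  have hpart1 : ∀ a : ∀ k, A k, ∃! j : Fin N, (e j).1 = a := by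
    intro a
    obtain ⟨j, hj⟩ := hbij.surjective a
    exact ⟨j, hj, fun j' hj' => hfinj (hj'.trans hj.symm)⟩
  set g := Fintype.bijInv hbij with hg
  have hgf : ∀ j, g ((e j).1) = j := Fintype.leftInverse_bijInv hbij
  have hfg : ∀ a, (e (g a)).1 = a := Fintype.rightInverse_bijInv hbij
  refine ⟨hpart1, ⟨fun a => (e (g a)).2, ⟨?_, ?_⟩, ?_⟩⟩
  · ext p
    constructor
    · rintro ⟨j, rfl⟩
      exact ⟨(e j).1, by simp only [hgf j]⟩
    · rintro ⟨a, rfl⟩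
      exact ⟨g a, Prod.ext (hfg a) rfl⟩
  · intro j
    simp only [hgf j]
  · rintro w' ⟨-, hw'⟩
    funext a
    have := hw' (g a)
    rw [hfg a] at this
    exact this


end
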